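/- Privacy profile of the Laplace mechanism: if M(x) = f(x) + Lap(b) where f has global sensitivity Δ = sup_{x≃x'} |f(x)−f(x')|, then for all ε ≥ 0, sup_{x≃x'} D_{e^ε}(M(x)‖M(x')) = max(1 − exp((ε − Δ/b)/2), 0). Equivalently, for 0 ≤ ε ≤ Δ/b, D_{e^ε}(Lap(b) ‖ Δ + Lap(b)) = 1 − exp((ε − Δ/b)/2), and it is 0 for ε > Δ/b. -/

import Mathlib

open Real

open Set MeasureTheory in
lemma exp_div_integrableOn_Iic (c a : ℝ) (hc : 0 < c) :
    IntegrableOn (fun x : ℝ => exp (x / c)) (Iic a) := by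
  have h := exp_neg_integrableOn_Ioi (-a) (inv_pos.mpr hc)
  have hemb : MeasurableEmbedding fun x : ℝ => -x :=
    (Homeomorph.neg ℝ).isClosedEmbedding.measurableEmbedding
  have h2 := ((Measure.measurePreserving_neg (volume : Measure ℝ)).integrableOn_comp_preimage
    hemb (f := fun x : ℝ => exp (-c⁻¹ * x)) (s := Ioi (-a))).mpr h
  have hpre : (fun x : ℝ => -x) ⁻¹' (Ioi (-a)) = Iio a := by
    ext x; simp [neg_lt_neg_iff]
  rw [hpre] at h2
  have : (fun x : ℝ => exp (-c⁻¹ * x)) ∘ (fun x : ℝ => -x) = fun x : ℝ => exp (x / c) := by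
    funext x; simp [Function.comp, div_eq_inv_mul, mul_comm]
  rw [this] at h2
  exact h2.congr_set_ae Iio_ae_eq_Iic.symm

open Set MeasureTheory in
lemma integral_exp_div_Iic (c a : ℝ) (hc : 0 < c) :
    ∫ x in Iic a, exp (x / c) = c * exp (a / c) := by
  calc ∫ x in Iic a, exp (x / c)
      = ∫ x in Iic a, (fun y : ℝ => exp (-(y * c⁻¹))) (-x) := by
        apply setIntegral_congr_fun measurableSet_Iic
        intro x _; simp [div_eq_mul_inv]
    _ = ∫ x in Ioi (-a), (fun y : ℝ => exp (-y)) (x * c⁻¹) :=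
        integral_comp_neg_Iic a (fun y : ℝ => exp (-(y * c⁻¹)))
    _ = c⁻¹⁻¹ • ∫ x in Ioi (-a * c⁻¹), exp (-x) :=
        integral_comp_mul_right_Ioi (fun y : ℝ => exp (-y)) (-a) (inv_pos.mpr hc)
    _ = c * exp (a / c) := by
        rw [integral_exp_neg_Ioi, smul_eq_mul, inv_inv, neg_mul, neg_neg, div_eq_mul_inv]

open Set MeasureTheory in
lemma lap_term_le (b : ℝ) (hb : 0 < b) (ε u v : ℝ) (h : ε + u ≤ v) :
    exp ε * ((1 / (2 * b)) * exp u) ≤ (1 / (2 * b)) * exp v := by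
  have h1 : exp ε * exp u ≤ exp v := by rw [← exp_add]; exact exp_le_exp.mpr h
  have h2 : (0:ℝ) ≤ 1 / (2 * b) := by positivity
  calc exp ε * ((1 / (2 * b)) * exp u) = (1 / (2 * b)) * (exp ε * exp u) := by ring
    _ ≤ (1 / (2 * b)) * exp v := mul_le_mul_of_nonneg_left h1 h2

open Set MeasureTheory in
lemma lap_term_ge (b : ℝ) (hb : 0 < b) (ε u v : ℝ) (h : v ≤ ε + u) :
    (1 / (2 * b)) * exp v ≤ exp ε * ((1 / (2 * b)) * exp u) := by
  have h1 : exp v ≤ exp ε * exp u := by rw [← exp_add]; exact exp_le_exp.mpr h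
  have h2 : (0:ℝ) ≤ 1 / (2 * b) := by positivity
  calc (1 / (2 * b)) * exp v ≤ (1 / (2 * b)) * (exp ε * exp u) :=
        mul_le_mul_of_nonneg_left h1 h2
    _ = exp ε * ((1 / (2 * b)) * exp u) := by ring

open Set MeasureTheory

theorem laplace_privacy_profile (b Δ : ℝ) (hb : 0 < b) (hΔ : 0 < Δ)
    (ε : ℝ) (hε : 0 ≤ ε) :
    ∫ z : ℝ, max ((1 / (2 * b)) * exp (-|z| / b)
        - exp ε * ((1 / (2 * b)) * exp (-|z - Δ| / b))) 0
      = max (1 - exp ((ε - Δ / b) / 2)) 0 := by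
  have hb2 : (2:ℝ) * b ≠ 0 := by positivity
  rcases le_or_gt (ε * b) Δ with hcase | hcase
  · -- main case : ε * b ≤ Δ
    set t : ℝ := (Δ - ε * b) / 2 with ht
    have ht0 : 0 ≤ t := by
      have h : 0 ≤ Δ - ε * b := by linarith
      positivity
    have htΔ : t ≤ Δ := by
      have hεb : 0 ≤ ε * b := mul_nonneg hε hb.le
      rw [ht]; linarith
    have key : (fun z : ℝ => max ((1 / (2 * b)) * exp (-|z| / b)
          - exp ε * ((1 / (2 * b)) * exp (-|z - Δ| / b))) 0)
        = Set.indicator (Set.Iic t) (fun z : ℝ => (1 / (2 * b)) * exp (-|z| / b)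
          - exp ε * ((1 / (2 * b)) * exp (-|z - Δ| / b))) := by
      funext z
      by_cases hz : z ≤ t
      · rw [Set.indicator_of_mem (show z ∈ Set.Iic t from hz)]
        refine max_eq_left (sub_nonneg.mpr (lap_term_le b hb ε _ _ ?_))
        have habs : |z - Δ| = Δ - z := by
          rw [abs_of_nonpos (by linarith : z - Δ ≤ 0)]; ring
        rw [habs]
        have hz' : z ≤ (Δ - ε * b) / 2 := ht ▸ hz
        have e1 : ε + -(Δ - z) / b = (ε * b - (Δ - z)) / b := by
          rw [eq_div_iff hb.ne', add_mul, div_mul_cancel₀ _ hb.ne']; ring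
        rw [e1, div_le_div_iff₀ hb hb]
        rcases abs_cases z with ⟨h1, _⟩ | ⟨h1, _⟩ <;> rw [h1] <;> nlinarith
      · rw [Set.indicator_of_notMem (show z ∉ Set.Iic t from hz)]
        push_neg at hz
        have hz0 : 0 < z := lt_of_le_of_lt ht0 hz
        have hz' : (Δ - ε * b) / 2 < z := ht ▸ hz
        refine max_eq_right (sub_nonpos.mpr (lap_term_ge b hb ε _ _ ?_))
        have e1 : ε + -|z - Δ| / b = (ε * b - |z - Δ|) / b := by
          rw [eq_div_iff hb.ne', add_mul, div_mul_cancel₀ _ hb.ne']; ring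
        rw [e1, div_le_div_iff₀ hb hb]
        have h1 : |z| = z := abs_of_pos hz0
        rcases abs_cases (z - Δ) with ⟨h2, _⟩ | ⟨h2, _⟩ <;> rw [h1, h2] <;> nlinarith
    rw [key, MeasureTheory.integral_indicator measurableSet_Iic]
    -- integrability pieces
    have ia : IntegrableOn (fun z : ℝ => (1 / (2 * b)) * exp (-|z| / b)) (Iic (0:ℝ)) := by
      refine IntegrableOn.congr_fun
        (((exp_div_integrableOn_Iic b 0 hb).const_mul (1 / (2 * b)))) ?_ measurableSet_Iic
      intro z hz
      simp only [Set.mem_Iic] at hz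
      simp only [abs_of_nonpos hz, neg_neg]
    have ib : IntegrableOn (fun z : ℝ => (1 / (2 * b)) * exp (-|z| / b)) (Ioc (0:ℝ) t) := by
      apply Continuous.integrableOn_Ioc
      fun_prop
    have hset : Iic t = Iic (0:ℝ) ∪ Ioc 0 t := (Set.Iic_union_Ioc_eq_Iic ht0).symm
    have i1 : IntegrableOn (fun z : ℝ => (1 / (2 * b)) * exp (-|z| / b)) (Iic t) := by
      rw [hset]; exact ia.union ib
    have i2 : IntegrableOn
        (fun z : ℝ => exp ε * ((1 / (2 * b)) * exp (-|z - Δ| / b))) (Iic t) := by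
      refine IntegrableOn.congr_fun
        (((exp_div_integrableOn_Iic b t hb).const_mul
          (exp ε * (1 / (2 * b)) * exp (-Δ / b)))) ?_ measurableSet_Iic
      intro z hz
      simp only [Set.mem_Iic] at hz
      have habs : -|z - Δ| / b = -Δ / b + z / b := by
        rw [abs_of_nonpos (by linarith : z - Δ ≤ 0)]; ring
      simp only [habs, exp_add]; ring
    rw [MeasureTheory.integral_sub i1 i2]
    -- compute the second integral
    have hB : ∫ z in Iic t, exp ε * ((1 / (2 * b)) * exp (-|z - Δ| / b))
        = exp ε * (1 / (2 * b)) * exp (-Δ / b) * (b * exp (t / b)) := by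
      rw [setIntegral_congr_fun measurableSet_Iic
        (g := fun z : ℝ => exp ε * (1 / (2 * b)) * exp (-Δ / b) * exp (z / b)) ?_]
      · rw [MeasureTheory.integral_const_mul, integral_exp_div_Iic b t hb]
      · intro z hz
        simp only [Set.mem_Iic] at hz
        have habs : -|z - Δ| / b = -Δ / b + z / b := by
          rw [abs_of_nonpos (by linarith : z - Δ ≤ 0)]; ring
        simp only [habs, exp_add]; ring
    -- compute the first integral
    have hA1 : ∫ z in Iic (0:ℝ), (1 / (2 * b)) * exp (-|z| / b) = 1 / 2 := by
      rw [setIntegral_congr_fun measurableSet_Iic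
        (g := fun z : ℝ => (1 / (2 * b)) * exp (z / b)) ?_]
      · rw [MeasureTheory.integral_const_mul, integral_exp_div_Iic b 0 hb,
          zero_div, exp_zero]
        field_simp
      · intro z hz
        simp only [Set.mem_Iic] at hz
        simp only [abs_of_nonpos hz, neg_neg]
    have hA2 : ∫ z in Ioc (0:ℝ) t, (1 / (2 * b)) * exp (-|z| / b)
        = (1 / 2) * (1 - exp (-(t / b))) := by
      rw [setIntegral_congr_fun measurableSet_Ioc
        (g := fun z : ℝ => (1 / (2 * b)) * exp (-(z / b))) ?_]
      · rw [← intervalIntegral.integral_of_le ht0,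
          intervalIntegral.integral_const_mul]
        have hFTC : ∫ x in (0:ℝ)..t, exp (-(x / b)) = b - b * exp (-(t / b)) := by
          have hD : ∀ x ∈ Set.uIcc (0:ℝ) t,
              HasDerivAt (fun y : ℝ => -b * exp (-(y / b))) (exp (-(x / b))) x := by
            intro x _
            have h1 : HasDerivAt (fun y : ℝ => -(y / b)) (-(1 / b)) x := by
              exact ((hasDerivAt_id x).div_const b).neg
            have h3 := (h1.exp).const_mul (-b)
            refine h3.congr_deriv ?_
            rw [mul_comm (exp _), ← mul_assoc, neg_mul_neg, mul_one_div_cancel hb.ne', one_mul]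
          rw [intervalIntegral.integral_eq_sub_of_hasDerivAt hD
            ((Continuous.intervalIntegrable (by fun_prop) 0 t))]
          rw [zero_div, neg_zero, exp_zero, mul_one]
          ring
        rw [hFTC]
        field_simp
      · intro z hz
        simp only [abs_of_pos hz.1, neg_div]
    have hA : ∫ z in Iic t, (1 / (2 * b)) * exp (-|z| / b)
        = 1 / 2 + (1 / 2) * (1 - exp (-(t / b))) := by
      rw [hset, setIntegral_union (Set.Iic_disjoint_Ioc le_rfl) measurableSet_Ioc ia ib,
        hA1, hA2]
    rw [hA, hB]
    -- final arithmetic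
    have harg1 : ε + -Δ / b + t / b = (ε - Δ / b) / 2 := by
      rw [ht]; field_simp
      ring
    have harg2 : -(t / b) = (ε - Δ / b) / 2 := by
      rw [ht, neg_div', div_eq_div_iff (by positivity) (by norm_num : (2:ℝ) ≠ 0)]
      field_simp
      ring
    have hE1 : exp ε * exp (-Δ / b) * exp (t / b) = exp ((ε - Δ / b) / 2) := by
      rw [← exp_add, ← exp_add, harg1]
    have hhalf : b / (2 * b) = 1 / 2 := by
      rw [div_eq_div_iff hb2 two_ne_zero]; ring
    have h3 : exp ε * (1 / (2 * b)) * exp (-Δ / b) * (b * exp (t / b))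
        = (1 / 2) * exp ((ε - Δ / b) / 2) := by
      calc exp ε * (1 / (2 * b)) * exp (-Δ / b) * (b * exp (t / b))
          = (b / (2 * b)) * (exp ε * exp (-Δ / b) * exp (t / b)) := by ring
        _ = (1 / 2) * exp ((ε - Δ / b) / 2) := by rw [hE1, hhalf]
    have hmax : max (1 - exp ((ε - Δ / b) / 2)) 0 = 1 - exp ((ε - Δ / b) / 2) := by
      apply max_eq_left
      rw [sub_nonneg]
      apply exp_le_one_iff.mpr
      rw [div_nonpos_iff]
      right
      exact ⟨by rw [sub_nonpos, le_div_iff₀ hb]; exact hcase, by norm_num⟩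
    rw [hmax, h3, harg2]
    ring
  · -- degenerate case : Δ < ε * b
    have key : (fun z : ℝ => max ((1 / (2 * b)) * exp (-|z| / b)
          - exp ε * ((1 / (2 * b)) * exp (-|z - Δ| / b))) 0) = fun _ => (0:ℝ) := by
      funext z
      refine max_eq_right (sub_nonpos.mpr (lap_term_ge b hb ε _ _ ?_))
      have e1 : ε + -|z - Δ| / b = (ε * b - |z - Δ|) / b := by
        rw [eq_div_iff hb.ne', add_mul, div_mul_cancel₀ _ hb.ne']; ring
      rw [e1, div_le_div_iff₀ hb hb]
      rcases abs_cases (z - Δ) with ⟨h2, _⟩ | ⟨h2, _⟩ <;>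
        rcases abs_cases z with ⟨h3, _⟩ | ⟨h3, _⟩ <;> rw [h2, h3] <;> nlinarith
    rw [key, MeasureTheory.integral_zero]
    symm
    apply max_eq_right
    rw [sub_nonpos]
    apply one_le_exp
    have : Δ / b < ε := (div_lt_iff₀ hb).mpr (by linarith)
    linarith
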